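/- Let T* be a macroelement consisting of triangles T = (x₀, x₁, x₂) and T⁻ = (x₁, x₂, x₃) sharing the edge e = (x₁, x₂). With β = 6|T⁻|/(5|T| + 4|T⁻|), define on T* the piecewise quadratic field ψ₁⁻ = 6λ₁λ₃(x₃ − x₁) + β·(−1)·λ₁λ₂(x₂ − x₁) supported appropriately on T⁻ and T, and let φ₁ be the piecewise linear Nedelec field equal to ∇λ₁ on T and −(λ₁∇λ₂ − λ₂∇λ₁) on T⁻. Then ∫_{T*} ψ₁⁻ · φ₁ dx = 0. -/

import Mathlib

open MeasureTheory Set Pointwise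
open scoped RealInnerProductSpace

noncomputable section MacroelementAux

/-- The standard triangle in `ℝ × ℝ`. -/
def S2 : Set (ℝ × ℝ) := {q | 0 ≤ q.1 ∧ 0 ≤ q.2 ∧ q.1 + q.2 ≤ 1}

lemma S2_closed : IsClosed S2 := by
  have : S2 = {q : ℝ × ℝ | 0 ≤ q.1} ∩ ({q | 0 ≤ q.2} ∩ {q | q.1 + q.2 ≤ 1}) := by
    ext q; simp [S2, and_assoc]
  rw [this]
  exact (isClosed_le continuous_const continuous_fst).inter
    ((isClosed_le continuous_const continuous_snd).inter
      (isClosed_le (continuous_fst.add continuous_snd) continuous_const))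

lemma S2_meas : MeasurableSet S2 := S2_closed.measurableSet

lemma S2_compact : IsCompact S2 := by
  refine IsCompact.of_isClosed_subset (isCompact_Icc (a := ((0:ℝ),(0:ℝ))) (b := (1,1))) S2_closed ?_
  rintro ⟨x, y⟩ ⟨h0, h1, h2⟩
  constructor <;> constructor <;> simp_all <;> linarith

lemma intPoly (a b c d e u : ℝ) :
    ∫ y in (0:ℝ)..u, (a + b*y + c*y^2 + d*y^3 + e*y^4)
      = a*u + b*u^2/2 + c*u^3/3 + d*u^4/4 + e*u^5/5 := by
  have key : ∀ t : ℝ, HasDerivAt (fun t : ℝ => a*t + b*t^2/2 + c*t^3/3 + d*t^4/4 + e*t^5/5)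
      (a + b*t + c*t^2 + d*t^3 + e*t^4) t := by
    intro t
    have h : HasDerivAt (fun t : ℝ => a*t^1 + (b/2)*t^2 + (c/3)*t^3 + (d/4)*t^4 + (e/5)*t^5)
        (a*(1*t^0) + (b/2)*(2*t^1) + (c/3)*(3*t^2) + (d/4)*(4*t^3) + (e/5)*(5*t^4)) t := by
      exact (((((hasDerivAt_pow 1 t).const_mul a).add
        ((hasDerivAt_pow 2 t).const_mul (b/2))).add
        ((hasDerivAt_pow 3 t).const_mul (c/3))).add
        ((hasDerivAt_pow 4 t).const_mul (d/4))).add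
        ((hasDerivAt_pow 5 t).const_mul (e/5)) |>.congr_deriv (by push_cast; ring)
    have hf : (fun t : ℝ => a*t + b*t^2/2 + c*t^3/3 + d*t^4/4 + e*t^5/5)
        = fun t : ℝ => a*t^1 + (b/2)*t^2 + (c/3)*t^3 + (d/4)*t^4 + (e/5)*t^5 := by
      funext t; ring
    rw [hf]
    exact h.congr_deriv (by ring)
  have hcont : Continuous fun y : ℝ => a + b*y + c*y^2 + d*y^3 + e*y^4 := by continuity
  rw [intervalIntegral.integral_eq_sub_of_hasDerivAt (fun y _ => key y)
    (hcont.intervalIntegrable _ _)]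
  ring


lemma fubiniS2 (g : ℝ × ℝ → ℝ) (hg : Continuous g) :
    ∫ q in S2, g q = ∫ x in (0:ℝ)..1, ∫ y in (0:ℝ)..(1-x), g (x, y) := by
  have hint : IntegrableOn g S2 := hg.continuousOn.integrableOn_compact S2_compact
  have hind : Integrable (S2.indicator g) ((volume : Measure ℝ).prod volume) := by
    rw [← Measure.volume_eq_prod ℝ ℝ]
    exact (integrable_indicator_iff S2_meas).2 hint
  rw [← integral_indicator S2_meas, Measure.volume_eq_prod ℝ ℝ, integral_prod _ hind]
  have h1 : ∀ x : ℝ, (∫ y, S2.indicator g (x, y)) =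
      (Icc (0:ℝ) 1).indicator (fun x => ∫ y in Icc 0 (1-x), g (x, y)) x := by
    intro x
    by_cases hx : 0 ≤ x ∧ x ≤ 1
    · have he : (fun y : ℝ => S2.indicator g (x, y))
          = (Icc (0:ℝ) (1-x)).indicator (fun y => g (x, y)) := by
        funext y
        have hiff : ((x, y) ∈ S2) ↔ (y ∈ Icc (0:ℝ) (1-x)) := by
          simp only [S2, mem_setOf_eq, mem_Icc]
          constructor
          · rintro ⟨_, h2, h3⟩; exact ⟨h2, by linarith⟩
          · rintro ⟨h2, h3⟩; exact ⟨hx.1, h2, by linarith⟩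
        by_cases hy : y ∈ Icc (0:ℝ) (1-x)
        · rw [indicator_of_mem (hiff.2 hy) g, indicator_of_mem hy]
        · rw [indicator_of_notMem (fun h => hy (hiff.1 h)) g, indicator_of_notMem hy]
      rw [he, integral_indicator measurableSet_Icc,
        indicator_of_mem (mem_Icc.2 hx)]
    · have he : (fun y : ℝ => S2.indicator g (x, y)) = fun _ => (0:ℝ) := by
        funext y
        refine indicator_of_notMem ?_ g
        rintro ⟨h0, h1, h2⟩
        rw [not_and_or, not_le, not_le] at hx
        rcases hx with hx | hx
        · exact absurd h0 (not_le.2 hx)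
        · dsimp at h0 h1 h2; linarith
      have hx' : x < 0 ∨ 1 < x := by rwa [not_and_or, not_le, not_le] at hx
      rw [he, integral_zero, indicator_of_notMem (by rw [mem_Icc]; intro h; rcases hx' with h'|h' <;> linarith [h.1, h.2])]
  calc ∫ x : ℝ, ∫ y : ℝ, S2.indicator g (x, y)
      = ∫ x : ℝ, (Icc (0:ℝ) 1).indicator (fun x => ∫ y in Icc 0 (1-x), g (x, y)) x := by
        exact integral_congr_ae (Filter.Eventually.of_forall h1)
    _ = ∫ x in Icc (0:ℝ) 1, ∫ y in Icc 0 (1-x), g (x, y) := integral_indicator measurableSet_Icc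
  rw [MeasureTheory.integral_Icc_eq_integral_Ioc, ← intervalIntegral.integral_of_le zero_le_one]
  refine intervalIntegral.integral_congr fun x hx => ?_
  rw [uIcc_of_le zero_le_one, mem_Icc] at hx
  rw [MeasureTheory.integral_Icc_eq_integral_Ioc, ← intervalIntegral.integral_of_le (by linarith [hx.2])]

abbrev EE := EuclideanSpace ℝ (Fin 2)

def Phi : EE ≃ᵐ ℝ × ℝ := (MeasurableEquiv.toLp 2 (Fin 2 → ℝ)).symm.trans (MeasurableEquiv.finTwoArrow)

lemma Phi_apply (p : EE) : Phi p = (p 0, p 1) := rfl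

lemma Phi_mp : MeasurePreserving Phi volume volume :=
  (volume_preserving_finTwoArrow ℝ).comp (EuclideanSpace.volume_preserving_symm_measurableEquiv_toLp (Fin 2))

def S0 : Set EE := Phi ⁻¹' S2

lemma S0_meas : MeasurableSet S0 := Phi.measurable S2_meas

lemma S0_mem (p : EE) : p ∈ S0 ↔ (0 ≤ p 0 ∧ 0 ≤ p 1 ∧ p 0 + p 1 ≤ 1) := Iff.rfl

lemma transfer_integral (f : ℝ × ℝ → ℝ) :
    ∫ p in S0, f (p 0, p 1) = ∫ q in S2, f q := by
  have := Phi_mp.setIntegral_preimage_emb Phi.measurableEmbedding f S2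
  simpa [Phi_apply, S0] using this

lemma transfer_measure : volume S0 = volume S2 :=
  Phi_mp.measure_preimage S2_meas.nullMeasurableSet

lemma volS2 : (volume S2).toReal = 1/2 := by
  have h := fubiniS2 (fun _ => (1:ℝ)) continuous_const
  rw [setIntegral_const] at h
  have h2 : (∫ x in (0:ℝ)..1, ∫ y in (0:ℝ)..(1-x), (1:ℝ)) = 1/2 := by
    have hin : ∀ x : ℝ, (∫ y in (0:ℝ)..(1-x), (1:ℝ))
        = 1 + (-1)*x + 0*x^2 + 0*x^3 + 0*x^4 := by
      intro x; rw [intervalIntegral.integral_const]; simp; ring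
    rw [intervalIntegral.integral_congr (g := fun x : ℝ => 1 + (-1)*x + 0*x^2 + 0*x^3 + 0*x^4)
      (fun x _ => hin x), intPoly]
    norm_num
  rw [h2] at h
  have h' : volume.real S2 = 1/2 := by simpa using h
  exact h'


set_option maxHeartbeats 1000000 in
lemma tri (v0 v1 v2 : EE) (hv : AffineIndependent ℝ ![v0, v1, v2])
    (lam : Fin 3 → (EE →ᵃ[ℝ] ℝ))
    (hlam : ∀ i j, lam i (![v0, v1, v2] j) = if i = j then 1 else 0)
    (f : ℝ → ℝ → ℝ → ℝ) :
    ∃ d : ℝ, 0 < d ∧ (volume (convexHull ℝ ({v0, v1, v2} : Set EE))).toReal = d / 2 ∧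
      (∫ p in convexHull ℝ ({v0, v1, v2} : Set EE), f (lam 0 p) (lam 1 p) (lam 2 p))
        = d * ∫ q in S2, f (1 - q.1 - q.2) q.1 q.2 := by
  classical
  set u : EE := v1 - v0 with hu
  set w : EE := v2 - v0 with hw
  -- the linear map
  set L : EE →L[ℝ] EE := ((EuclideanSpace.proj (0 : Fin 2)).smulRight u) +
      ((EuclideanSpace.proj (1 : Fin 2)).smulRight w) with hL
  have hLapp : ∀ p : EE, L p = p 0 • u + p 1 • w := by
    intro p
    simp [hL, ContinuousLinearMap.smulRight_apply]
  -- injectivity ingredients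
  have hzero : ∀ a b : ℝ, a • u + b • w = 0 → a = 0 ∧ b = 0 := by
    intro a b hab
    have key := affineIndependent_iff.1 hv Finset.univ ![-(a+b), a, b]
      (by simp [Fin.sum_univ_three])
      (by
        simp only [Fin.sum_univ_three, Matrix.cons_val_zero, Matrix.cons_val_one, Matrix.head_cons,
          Matrix.cons_val_two, Matrix.tail_cons]
        rw [hu, hw] at hab
        rw [show -(a+b) • v0 + a • v1 + b • v2 = a • (v1 - v0) + b • (v2 - v0) by
          module]
        exact hab)
    exact ⟨by simpa using key 1 (Finset.mem_univ _), by simpa using key 2 (Finset.mem_univ _)⟩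
  have hLinj : Function.Injective L := by
    intro p q hpq
    have h0 : L (p - q) = 0 := by
      rw [map_sub, hpq, sub_self]
    rw [hLapp] at h0
    have hc : (p - q) 0 = p 0 - q 0 := rfl
    have hc1 : (p - q) 1 = p 1 - q 1 := rfl
    rw [hc, hc1] at h0
    obtain ⟨h1, h2⟩ := hzero _ _ h0
    ext i
    have e0 : p 0 = q 0 := by linarith
    have e1 : p 1 = q 1 := by linarith
    fin_cases i
    · exact e0
    · exact e1
  -- the affine map
  set A : EE → EE := fun p => v0 + L p with hA
  let Aff : EE →ᵃ[ℝ] EE := AffineMap.mk' A (L : EE →ₗ[ℝ] EE) 0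
    (fun p' => by simp [hA, vsub_eq_sub, vadd_eq_add, sub_zero]; abel)
  have hAffA : ⇑Aff = A := by
    funext p; simp [Aff, AffineMap.coe_mk']
  -- convexity of S0
  have hS0conv : Convex ℝ S0 := by
    intro p hp q hq a b ha hb hab
    rw [S0_mem] at hp hq ⊢
    have c0 : (a • p + b • q) 0 = a * p 0 + b * q 0 := rfl
    have c1 : (a • p + b • q) 1 = a * p 1 + b * q 1 := rfl
    rw [c0, c1]
    refine ⟨by nlinarith [hp.1, hq.1], by nlinarith [hp.2.1, hq.2.1], by nlinarith [hp.2.2, hq.2.2]⟩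
  -- vertices in the image
  have hv0 : v0 ∈ A '' S0 := by
    refine ⟨0, ?_, ?_⟩
    · rw [S0_mem]; norm_num
    · simp [hA, hLapp]
  have hv1 : v1 ∈ A '' S0 := by
    refine ⟨(WithLp.equiv 2 (Fin 2 → ℝ)).symm ![1, 0], ?_, ?_⟩
    · rw [S0_mem]; simp [WithLp.equiv_symm_apply, PiLp.toLp_apply]
    · rw [hA]; simp only [hLapp, WithLp.equiv_symm_apply, PiLp.toLp_apply]
      simp [hu, hw]
  have hv2 : v2 ∈ A '' S0 := by
    refine ⟨(WithLp.equiv 2 (Fin 2 → ℝ)).symm ![0, 1], ?_, ?_⟩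
    · rw [S0_mem]; simp [WithLp.equiv_symm_apply, PiLp.toLp_apply]
    · rw [hA]; simp only [hLapp, WithLp.equiv_symm_apply, PiLp.toLp_apply]
      simp [hu, hw]
  -- image equals the triangle
  have himg : A '' S0 = convexHull ℝ ({v0, v1, v2} : Set EE) := by
    apply Subset.antisymm
    · rintro _ ⟨p, hp, rfl⟩
      rw [S0_mem] at hp
      have hsum : ∑ i, (![1 - p 0 - p 1, p 0, p 1] : Fin 3 → ℝ) i = 1 := by
        simp [Fin.sum_univ_three]; ring
      have hcm : A p = Finset.univ.centerMass ![1 - p 0 - p 1, p 0, p 1] ![v0, v1, v2] := by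
        rw [Finset.centerMass_eq_of_sum_1 _ _ hsum]
        simp only [Fin.sum_univ_three, Matrix.cons_val_zero, Matrix.cons_val_one, Matrix.head_cons,
          Matrix.cons_val_two, Matrix.tail_cons]
        rw [hA]; simp only [hLapp, hu, hw]
        module
      rw [hcm]
      refine Finset.centerMass_mem_convexHull _ ?_ (by rw [hsum]; norm_num) ?_
      · intro i _
        fin_cases i
        · show (0:ℝ) ≤ 1 - p 0 - p 1; linarith [hp.2.2]
        · show (0:ℝ) ≤ p 0; exact hp.1
        · show (0:ℝ) ≤ p 1; exact hp.2.1
      · intro i _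
        fin_cases i <;> simp
    · apply convexHull_min
      · intro z hz
        rcases hz with h | h | h
        · rw [h]; exact hv0
        · rw [h]; exact hv1
        · rw [mem_singleton_iff] at h; rw [h]; exact hv2
      · rw [← hAffA]
        exact hS0conv.affine_image Aff
  -- determinant nonzero
  have hdet : (L : EE →ₗ[ℝ] EE).det ≠ 0 := by
    intro h0
    obtain ⟨x, hxk, hxb⟩ := SetLike.exists_of_lt (LinearMap.bot_lt_ker_of_det_eq_zero h0)
    rw [LinearMap.mem_ker, ContinuousLinearMap.coe_coe] at hxk
    have hx0 : x = 0 := hLinj (by rw [hxk, map_zero])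
    exact hxb (by rw [hx0]; exact Submodule.zero_mem ⊥)
  set d : ℝ := |(L : EE →ₗ[ℝ] EE).det| with hd
  have hdpos : 0 < d := abs_pos.2 hdet
  -- volume of the triangle
  have hvolT : (volume (convexHull ℝ ({v0, v1, v2} : Set EE))).toReal = d / 2 := by
    rw [← himg]
    have him2 : A '' S0 = v0 +ᵥ (⇑(L : EE →ₗ[ℝ] EE) '' S0) := by
      rw [← Set.image_vadd, Set.image_image]
      rfl
    rw [him2, measure_vadd, Measure.addHaar_image_linearMap, transfer_measure,
      ENNReal.toReal_mul, ENNReal.toReal_ofReal (abs_nonneg _), volS2]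
    ring
  -- change of variables for the integral
  have hder : ∀ p ∈ S0, HasFDerivWithinAt A L S0 p := fun p _ =>
    (L.hasFDerivAt.const_add v0).hasFDerivWithinAt
  have hAinj : InjOn A S0 := fun p _ q _ h => hLinj (by
    rw [hA] at h
    exact add_left_cancel h)
  have cov := integral_image_eq_integral_abs_det_fderiv_smul volume S0_meas hder hAinj
    (fun p => f (lam 0 p) (lam 1 p) (lam 2 p))
  -- barycentric coordinates compose
  have hlin : ∀ i : Fin 3, ∀ p : EE, lam i (A p) =
      lam i v0 + p 0 * (lam i v1 - lam i v0) + p 1 * (lam i v2 - lam i v0) := by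
    intro i p
    have h1 : A p = (L p) +ᵥ v0 := by rw [hA, vadd_eq_add, add_comm]
    rw [h1, AffineMap.map_vadd, hLapp, map_add, (lam i).linear.map_smul, (lam i).linear.map_smul]
    have e1 : (lam i).linear u = lam i v1 - lam i v0 := by
      rw [hu, show v1 - v0 = v1 -ᵥ v0 from rfl, AffineMap.linearMap_vsub]; rfl
    have e2 : (lam i).linear w = lam i v2 - lam i v0 := by
      rw [hw, show v2 - v0 = v2 -ᵥ v0 from rfl, AffineMap.linearMap_vsub]; rfl
    rw [e1, e2]
    simp [vadd_eq_add, smul_eq_mul]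
    ring
  have l0 : lam 0 v0 = 1 := by simpa using hlam 0 0
  have l1 : lam 0 v1 = 0 := by simpa using hlam 0 1
  have l2 : lam 0 v2 = 0 := by simpa using hlam 0 2
  have l3 : lam 1 v0 = 0 := by simpa using hlam 1 0
  have l4 : lam 1 v1 = 1 := by simpa using hlam 1 1
  have l5 : lam 1 v2 = 0 := by simpa using hlam 1 2
  have l6 : lam 2 v0 = 0 := by simpa using hlam 2 0
  have l7 : lam 2 v1 = 0 := by simpa using hlam 2 1
  have l8 : lam 2 v2 = 1 := by simpa using hlam 2 2
  refine ⟨d, hdpos, hvolT, ?_⟩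
  rw [← himg, cov]
  have : ∀ p : EE, |(L : EE →ₗ[ℝ] EE).det| • f (lam 0 (A p)) (lam 1 (A p)) (lam 2 (A p))
      = d * ((fun q : ℝ × ℝ => f (1 - q.1 - q.2) q.1 q.2) (p 0, p 1)) := by
    intro p
    rw [hlin 0 p, hlin 1 p, hlin 2 p, l0, l1, l2, l3, l4, l5, l6, l7, l8]
    rw [hd, smul_eq_mul]
    norm_num
    tauto
  calc (∫ p in S0, |(ContinuousLinearMap.det L)| • f (lam 0 (A p)) (lam 1 (A p)) (lam 2 (A p)))
      = ∫ p in S0, d * ((fun q : ℝ × ℝ => f (1 - q.1 - q.2) q.1 q.2) (p 0, p 1)) := by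
        exact integral_congr_ae (Filter.Eventually.of_forall fun p => this p)
    _ = d * ∫ p in S0, (fun q : ℝ × ℝ => f (1 - q.1 - q.2) q.1 q.2) (p 0, p 1) := by
        rw [integral_const_mul]
    _ = d * ∫ q in S2, f (1 - q.1 - q.2) q.1 q.2 := by
        rw [transfer_integral (fun q : ℝ × ℝ => f (1 - q.1 - q.2) q.1 q.2)]

lemma intT (β : ℝ) : (∫ q in S2, β * (q.1 * q.2)) = β / 24 := by
  rw [fubiniS2 _ (by continuity)]
  have hin : ∀ x : ℝ, (∫ y in (0:ℝ)..(1-x), β * (x * y))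
      = 0 + (β/2)*x + (-β)*x^2 + (β/2)*x^3 + 0*x^4 := by
    intro x
    rw [intervalIntegral.integral_congr
      (g := fun y : ℝ => 0 + (β*x)*y + 0*y^2 + 0*y^3 + 0*y^4) (fun y _ => by ring), intPoly]
    ring
  rw [intervalIntegral.integral_congr
    (g := fun x : ℝ => 0 + (β/2)*x + (-β)*x^2 + (β/2)*x^3 + 0*x^4) (fun x _ => hin x), intPoly]
  ring

lemma intN (β : ℝ) : (∫ q in S2,
      (β * (1-q.1-q.2)^2 * q.1 - 6 * ((1-q.1-q.2) * q.1 * q.2) + β * ((1-q.1-q.2) * q.1^2)))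
    = β/30 - 1/20 := by
  rw [fubiniS2 _ (by continuity)]
  have hin : ∀ x : ℝ, (∫ y in (0:ℝ)..(1-x),
        (β * (1-x-y)^2 * x - 6 * ((1-x-y) * x * y) + β * ((1-x-y) * x^2)))
      = 0 + (β/3 - 1)*x + (3 - β/2)*x^2 + (-3)*x^3 + (β/6 + 1)*x^4 := by
    intro x
    rw [intervalIntegral.integral_congr
      (g := fun y : ℝ => (β*(x - x^2)) + (β*(-2*x + x^2) + (-6*x + 6*x^2))*y
        + (β*x + 6*x)*y^2 + 0*y^3 + 0*y^4) (fun y _ => by ring), intPoly]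
    ring
  rw [intervalIntegral.integral_congr
    (g := fun x : ℝ => 0 + (β/3 - 1)*x + (3 - β/2)*x^2 + (-3)*x^3 + (β/6 + 1)*x^4)
    (fun x _ => hin x), intPoly]
  ring

end MacroelementAux

/-- Orthogonality on the macroelement `T* = T ∪ T⁻`. -/
theorem macroelement_orthogonality (x0 x1 x2 x3 : EuclideanSpace ℝ (Fin 2))
    (hT : AffineIndependent ℝ ![x0, x1, x2])
    (hT' : AffineIndependent ℝ ![x1, x2, x3])
    (μ ν : Fin 3 → (EuclideanSpace ℝ (Fin 2) →ᵃ[ℝ] ℝ))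
    (hμ : ∀ i j, μ i (![x0, x1, x2] j) = if i = j then 1 else 0)
    (hν : ∀ i j, ν i (![x1, x2, x3] j) = if i = j then 1 else 0)
    (gT gN : Fin 3 → EuclideanSpace ℝ (Fin 2))
    (hgT : ∀ i p, μ i p = μ i 0 + ⟪gT i, p⟫)
    (hgN : ∀ i p, ν i p = ν i 0 + ⟪gN i, p⟫)
    (β : ℝ)
    (hβ : β = 6 * (volume (convexHull ℝ ({x1, x2, x3} : Set _))).toReal /
      (5 * (volume (convexHull ℝ ({x0, x1, x2} : Set _))).toReal +
        4 * (volume (convexHull ℝ ({x1, x2, x3} : Set _))).toReal)) :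
    (∫ p in convexHull ℝ ({x0, x1, x2} : Set _),
        ⟪(-(β * μ 1 p * μ 2 p)) • (x2 - x1), gT 1⟫) +
      (∫ p in convexHull ℝ ({x1, x2, x3} : Set _),
        ⟪(6 * ν 0 p * ν 2 p) • (x3 - x1) - (β * ν 0 p * ν 1 p) • (x2 - x1),
          -(ν 0 p • gN 1 - ν 1 p • gN 0)⟫) = 0 := by
  classical
  have key : ∀ (g : EE) (lam : EE →ᵃ[ℝ] ℝ), (∀ p, lam p = lam 0 + ⟪g, p⟫) →
      ∀ p q : EE, ⟪p - q, g⟫ = lam p - lam q := by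
    intro g lam hg p q
    rw [real_inner_comm, inner_sub_right, hg p, hg q]
    ring
  have i21T : ⟪x2 - x1, gT 1⟫ = -1 := by
    rw [key (gT 1) (μ 1) (hgT 1) x2 x1,
      show μ 1 x2 = 0 by simpa using hμ 1 2, show μ 1 x1 = 1 by simpa using hμ 1 1]
    norm_num
  have h30 : ⟪x3 - x1, gN 0⟫ = -1 := by
    rw [key (gN 0) (ν 0) (hgN 0) x3 x1,
      show ν 0 x3 = 0 by simpa using hν 0 2, show ν 0 x1 = 1 by simpa using hν 0 0]
    norm_num
  have h31 : ⟪x3 - x1, gN 1⟫ = 0 := by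
    rw [key (gN 1) (ν 1) (hgN 1) x3 x1,
      show ν 1 x3 = 0 by simpa using hν 1 2, show ν 1 x1 = 0 by simpa using hν 1 0]
    norm_num
  have h20 : ⟪x2 - x1, gN 0⟫ = -1 := by
    rw [key (gN 0) (ν 0) (hgN 0) x2 x1,
      show ν 0 x2 = 0 by simpa using hν 0 1, show ν 0 x1 = 1 by simpa using hν 0 0]
    norm_num
  have h21 : ⟪x2 - x1, gN 1⟫ = 1 := by
    rw [key (gN 1) (ν 1) (hgN 1) x2 x1,
      show ν 1 x2 = 1 by simpa using hν 1 1, show ν 1 x1 = 0 by simpa using hν 1 0]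
    norm_num
  have expand : ∀ (s t c0 c1 : ℝ) (uu ww g0 g1 : EE),
      ⟪s • uu - t • ww, -(c0 • g1 - c1 • g0)⟫
        = -(s*c0)*⟪uu, g1⟫ + (s*c1)*⟪uu, g0⟫ + (t*c0)*⟪ww, g1⟫ - (t*c1)*⟪ww, g0⟫ := by
    intro s t c0 c1 uu ww g0 g1
    simp only [inner_sub_left, inner_neg_right, inner_sub_right, real_inner_smul_left,
      real_inner_smul_right]
    ring
  obtain ⟨dT, hdTpos, hvT, hiT⟩ := tri x0 x1 x2 hT μ hμ (fun a b c => β * (b * c))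
  obtain ⟨dN, hdNpos, hvN, hiN⟩ := tri x1 x2 x3 hT' ν hν
    (fun a b c => β * a^2 * b - 6 * (a * b * c) + β * (a * b^2))
  have hT1 : (fun p => ⟪(-(β * μ 1 p * μ 2 p)) • (x2 - x1), gT 1⟫)
      = fun p => (fun a b c => β * (b * c)) (μ 0 p) (μ 1 p) (μ 2 p) := by
    funext p
    rw [real_inner_smul_left, i21T]
    ring
  have hN1 : (fun p => ⟪(6 * ν 0 p * ν 2 p) • (x3 - x1) - (β * ν 0 p * ν 1 p) • (x2 - x1),
        -(ν 0 p • gN 1 - ν 1 p • gN 0)⟫)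
      = fun p => (fun a b c => β * a^2 * b - 6 * (a * b * c) + β * (a * b^2))
          (ν 0 p) (ν 1 p) (ν 2 p) := by
    funext p
    rw [expand, h31, h30, h21, h20]
    ring
  rw [show (∫ p in convexHull ℝ ({x0, x1, x2} : Set EE),
        ⟪(-(β * μ 1 p * μ 2 p)) • (x2 - x1), gT 1⟫)
      = ∫ p in convexHull ℝ ({x0, x1, x2} : Set EE),
        (fun a b c => β * (b * c)) (μ 0 p) (μ 1 p) (μ 2 p) by rw [hT1]]
  rw [show (∫ p in convexHull ℝ ({x1, x2, x3} : Set EE),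
        ⟪(6 * ν 0 p * ν 2 p) • (x3 - x1) - (β * ν 0 p * ν 1 p) • (x2 - x1),
          -(ν 0 p • gN 1 - ν 1 p • gN 0)⟫)
      = ∫ p in convexHull ℝ ({x1, x2, x3} : Set EE),
        (fun a b c => β * a^2 * b - 6 * (a * b * c) + β * (a * b^2))
          (ν 0 p) (ν 1 p) (ν 2 p) by rw [hN1]]
  rw [hiT, hiN, intT β, intN β]
  rw [hvT, hvN] at hβ
  rw [hβ]
  have hden : (0:ℝ) < 5 * (dT / 2) + 4 * (dN / 2) := by positivity
  have hden' : 5 * (dT / 2) + 4 * (dN / 2) ≠ 0 := ne_of_gt hden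
  field_simp
  ring
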